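/- arXiv:2505.05439 — 6 statements merged into one kernel-verified Lean document; each statement's English description precedes it below -/
import Mathlib

section
/- Let Q0 be a finite nonempty type and let E : Q0 → Q0 → ℤ be any integer matrix; for x, y : Q0 → ℤ write ⟨x, y⟩ := Σ_{i,j} x i * E i j * y j. Let d, δ : Q0 → ℕ be dimension vectors such that for every i ∈ Q0 one has ⟨e_i, δ⟩ < 0 and ⟨δ, e_i⟩ < 0, where e_i is the i-th standard basis vector. Then the sequence n ↦ ⟨d + n·δ, d + n·δ⟩ (n ∈ ℕ) tends to −∞ as n → ∞. -/
open Finset Filter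

/-- The bilinear (Euler) form associated to an integer matrix `E`. -/
def eulerForm {Q0 : Type*} [Fintype Q0] (E : Q0 → Q0 → ℤ) (x y : Q0 → ℤ) : ℤ :=
  ∑ i, ∑ j, x i * E i j * y j

/-- A dimension vector `Q0 → ℕ` viewed as an integer vector. -/
def nvec {Q0 : Type*} (v : Q0 → ℕ) : Q0 → ℤ := fun i => (v i : ℤ)

lemma eulerForm_single_left {Q0 : Type*} [Fintype Q0] [DecidableEq Q0]
    (E : Q0 → Q0 → ℤ) (i : Q0) (y : Q0 → ℤ) :
    eulerForm E (Pi.single i 1) y = ∑ j, E i j * y j := by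
  unfold eulerForm
  rw [Finset.sum_eq_single i]
  · simp [Pi.single_apply]
  · intro b _ hb
    simp [Pi.single_apply, hb]
  · simp

lemma eulerForm_single_right {Q0 : Type*} [Fintype Q0] [DecidableEq Q0]
    (E : Q0 → Q0 → ℤ) (x : Q0 → ℤ) (j : Q0) :
    eulerForm E x (Pi.single j 1) = ∑ i, x i * E i j := by
  unfold eulerForm
  apply Finset.sum_congr rfl
  intro i _
  rw [Finset.sum_eq_single j]
  · simp [Pi.single_apply]
  · intro b _ hb
    simp [Pi.single_apply, hb]
  · simp

lemma eulerForm_left_decomp {Q0 : Type*} [Fintype Q0] [DecidableEq Q0]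
    (E : Q0 → Q0 → ℤ) (x y : Q0 → ℤ) :
    eulerForm E x y = ∑ i, x i * eulerForm E (Pi.single i 1) y := by
  simp only [eulerForm_single_left, Finset.mul_sum]
  unfold eulerForm
  apply Finset.sum_congr rfl
  intro i _
  apply Finset.sum_congr rfl
  intro j _
  ring

lemma eulerForm_right_decomp {Q0 : Type*} [Fintype Q0] [DecidableEq Q0]
    (E : Q0 → Q0 → ℤ) (x y : Q0 → ℤ) :
    eulerForm E x y = ∑ j, y j * eulerForm E x (Pi.single j 1) := by
  simp only [eulerForm_single_right, Finset.mul_sum]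
  unfold eulerForm
  rw [Finset.sum_comm]
  apply Finset.sum_congr rfl
  intro j _
  apply Finset.sum_congr rfl
  intro i _
  ring

/-- Under `⟨e_i, δ⟩ < 0` and `⟨δ, e_i⟩ < 0` for all `i`, the self-pairing
`⟨d + nδ, d + nδ⟩` tends to `-∞` as `n → ∞`. -/
theorem eulerForm_selfPairing_tendsto_atBot
    {Q0 : Type*} [Fintype Q0] [DecidableEq Q0] [Nonempty Q0]
    (E : Q0 → Q0 → ℤ) (d δ : Q0 → ℕ)
    (h1 : ∀ i : Q0, eulerForm E (Pi.single i 1) (nvec δ) < 0)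
    (h2 : ∀ i : Q0, eulerForm E (nvec δ) (Pi.single i 1) < 0) :
    Tendsto (fun n : ℕ =>
        eulerForm E (fun i => (d i : ℤ) + n * δ i) (fun i => (d i : ℤ) + n * δ i))
      atTop atBot := by
  set A := eulerForm E (nvec δ) (nvec δ) with hA
  set B := eulerForm E (nvec d) (nvec δ) + eulerForm E (nvec δ) (nvec d) with hB
  set C := eulerForm E (nvec d) (nvec d) with hC
  -- expansion
  have expand : ∀ n : ℕ,
      eulerForm E (fun i => (d i : ℤ) + n * δ i) (fun i => (d i : ℤ) + n * δ i)
        = C + n * B + n ^ 2 * A := by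
    intro n
    simp only [hA, hB, hC, eulerForm, nvec, Finset.mul_sum, mul_add,
      ← Finset.sum_add_distrib]
    apply Finset.sum_congr rfl
    intro i _
    apply Finset.sum_congr rfl
    intro j _
    ring
  -- δ is nonzero
  have hδne : ∃ j, 0 < δ j := by
    by_contra h
    push_neg at h
    have hδ0 : ∀ j, δ j = 0 := fun j => Nat.le_zero.mp (h j)
    obtain ⟨i⟩ := ‹Nonempty Q0›
    have := h1 i
    rw [eulerForm_single_left] at this
    simp [nvec, hδ0] at this
  -- A ≤ -1
  have hAneg : A ≤ -1 := by
    rw [hA, eulerForm_left_decomp]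
    calc ∑ i, nvec δ i * eulerForm E (Pi.single i 1) (nvec δ)
        ≤ ∑ i, -(δ i : ℤ) := by
          apply Finset.sum_le_sum
          intro i _
          have := h1 i
          have hnn : (0:ℤ) ≤ nvec δ i := by simp [nvec]
          calc nvec δ i * eulerForm E (Pi.single i 1) (nvec δ)
              ≤ nvec δ i * (-1) := by
                apply mul_le_mul_of_nonneg_left (by omega) hnn
            _ = -(δ i : ℤ) := by simp [nvec]
      _ ≤ -1 := by
          obtain ⟨j, hj⟩ := hδne
          have : (1:ℤ) ≤ ∑ i, (δ i : ℤ) := by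
            calc (1:ℤ) ≤ (δ j : ℤ) := by exact_mod_cast hj
              _ ≤ ∑ i, (δ i : ℤ) := Finset.single_le_sum
                  (fun i _ => Int.natCast_nonneg _) (Finset.mem_univ j)
          rw [Finset.sum_neg_distrib]
          omega
  -- B ≤ 0
  have hBle : B ≤ 0 := by
    have hb1 : eulerForm E (nvec d) (nvec δ) ≤ 0 := by
      rw [eulerForm_left_decomp]
      apply Finset.sum_nonpos
      intro i _
      exact mul_nonpos_of_nonneg_of_nonpos (by simp [nvec]) (h1 i).le
    have hb2 : eulerForm E (nvec δ) (nvec d) ≤ 0 := by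
      rw [eulerForm_right_decomp]
      apply Finset.sum_nonpos
      intro j _
      exact mul_nonpos_of_nonneg_of_nonpos (by simp [nvec]) (h2 j).le
    omega
  -- bound: f n ≤ C - n^2
  have hbound : ∀ n : ℕ,
      eulerForm E (fun i => (d i : ℤ) + n * δ i) (fun i => (d i : ℤ) + n * δ i)
        ≤ C - (n : ℤ) ^ 2 := by
    intro n
    rw [expand n]
    have h1' : (n : ℤ) * B ≤ 0 :=
      mul_nonpos_of_nonneg_of_nonpos (by positivity) hBle
    have h2' : (n : ℤ) ^ 2 * A ≤ (n : ℤ) ^ 2 * (-1) :=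
      mul_le_mul_of_nonneg_left hAneg (by positivity)
    nlinarith
  apply tendsto_atBot_mono' atTop (Eventually.of_forall hbound)
  have : Tendsto (fun n : ℕ => (n : ℤ) ^ 2) atTop atTop := by
    exact (tendsto_pow_atTop (two_ne_zero)).comp tendsto_natCast_atTop_atTop
  simpa [sub_eq_add_neg] using tendsto_atBot_add_const_left atTop C (tendsto_neg_atBot_iff.mpr this)
end

section
/- Let Q0 be a finite nonempty type and E : Q0 → Q0 → ℤ a symmetric matrix with E i i = 1 for all i and E i j ≤ 0 for i ≠ j, with form ⟨x, y⟩ := Σ_{i,j} x i * E i j * y j. Let δ : Q0 → ℕ satisfy condition (∗) for E, and let d : Q0 → ℕ have full support (d i ≥ 1 for every i). Then for every M ∈ ℤ there exists N ∈ ℕ such that for all n ≥ N and every dimension vector v : Q0 → ℕ with v ≤ d + n·δ (componentwise), v ≠ 0 and v ≠ d + n·δ, one has ⟨v, (d + n·δ) − v⟩ ≤ −M. Equivalently, max_{0 < v < d+nδ} ⟨v, d+nδ−v⟩ tends to −∞ as n → ∞. -/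
open Finset

/-- The bilinear form associated to an integer matrix `E`:
`⟨x, y⟩ = Σ_{i,j} x i * E i j * y j`. -/
def bform {Q0 : Type*} [Fintype Q0] (E : Q0 → Q0 → ℤ) (x y : Q0 → ℤ) : ℤ :=
  ∑ i, ∑ j, x i * E i j * y j

/-- The underlying simple graph of a quiver with matrix `E`: `i` is adjacent to `j`
iff `i ≠ j` and the `(i,j)` entry is negative (for symmetric `E` this is the usual
adjacency `E i j < 0`). -/
def quivGraph {Q0 : Type*} (E : Q0 → Q0 → ℤ) : SimpleGraph Q0 where
  Adj i j := i ≠ j ∧ (E i j < 0 ∨ E j i < 0)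
  symm := ⟨fun _ _ h => ⟨h.1.symm, h.2.symm⟩⟩
  loopless := ⟨fun _ h => h.1 rfl⟩

/-- The subgraph of `quivGraph E` induced on the support of `δ`. -/
def suppGraph {Q0 : Type*} (E : Q0 → Q0 → ℤ) (δ : Q0 → ℕ) :
    SimpleGraph {i : Q0 // δ i ≠ 0} :=
  (quivGraph E).comap Subtype.val

/-- Condition (∗): `⟨e_i, δ⟩ < 0` for every vertex `i`, and any two connected components
of the subgraph induced on `supp δ` are at distance at most one, i.e. either they are
joined by an edge or some vertex is adjacent to both. -/
def condStar {Q0 : Type*} [Fintype Q0] [DecidableEq Q0]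
    (E : Q0 → Q0 → ℤ) (δ : Q0 → ℕ) : Prop :=
  (∀ i : Q0, bform E (Pi.single i 1) (nvec δ) < 0) ∧
    ∀ u v : {i : Q0 // δ i ≠ 0},
      (suppGraph E δ).Reachable u v ∨
        ∃ x y : {i : Q0 // δ i ≠ 0},
          (suppGraph E δ).Reachable u x ∧ (suppGraph E δ).Reachable v y ∧
            ((quivGraph E).Adj x.1 y.1 ∨
              ∃ w : Q0, (quivGraph E).Adj w x.1 ∧ (quivGraph E).Adj w y.1)

/-- Weak condition (∗): as `condStar` but with `⟨e_i, δ⟩ ≤ 0`. -/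
def condStarWeak {Q0 : Type*} [Fintype Q0] [DecidableEq Q0]
    (E : Q0 → Q0 → ℤ) (δ : Q0 → ℕ) : Prop :=
  (∀ i : Q0, bform E (Pi.single i 1) (nvec δ) ≤ 0) ∧
    ∀ u v : {i : Q0 // δ i ≠  0},
      (suppGraph E δ).Reachable u v ∨
        ∃ x y : {i : Q0 // δ i ≠ 0},
          (suppGraph E δ).Reachable u x ∧ (suppGraph E δ).Reachable v y ∧
            ((quivGraph E).Adj x.1 y.1 ∨
              ∃ w : Q0, (quivGraph E).Adj w x.1 ∧ (quivGraph E).Adj w y.1)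

section AuxLemmas

lemma pair_ineq (Wi Wj Vi Vj : ℚ) (hWi : 0 < Wi) (hWj : 0 < Wj) :
    Vi * (Wi - Vi) / Wi * Wj + Vj * (Wj - Vj) / Wj * Wi -
      Vi * (Wj - Vj) - Vj * (Wi - Vi) ≤ 0 := by
  have key : Vi * (Wi - Vi) / Wi * Wj + Vj * (Wj - Vj) / Wj * Wi -
      Vi * (Wj - Vj) - Vj * (Wi - Vi) = -(Vi * Wj - Vj * Wi)^2 / (Wi * Wj) := by
    field_simp
    ring
  rw [key]
  apply div_nonpos_of_nonpos_of_nonneg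
  · simp [sq_nonneg]
  · positivity

lemma walk_crossing {α : Type*} (G : SimpleGraph α) (P : α → Prop) :
    ∀ {a b : α}, G.Walk a b → P a → ¬ P b → ∃ x y, G.Adj x y ∧ P x ∧ ¬ P y := by
  intro a b w
  induction w with
  | nil => intro ha hb; exact absurd ha hb
  | @cons u c w' h q ih =>
    intro ha hb
    by_cases hv : P c
    · exact ih hv hb
    · exact ⟨u, c, h, ha, hv⟩

variable {Q0 : Type*} [Fintype Q0] [DecidableEq Q0]

lemma qcalc (e : Q0 → Q0 → ℚ) (he : ∀ i j, 0 ≤ e i j) (hsym : ∀ i j, e i j = e j i)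
    (W V c : Q0 → ℚ) (hW : ∀ i, 0 < W i) (hV0 : ∀ i, 0 ≤ V i) (hVW : ∀ i, V i ≤ W i)
    (hkey : ∀ i, W i ≤ c i + ∑ j, e i j * W j) :
    (∑ i, V i * (W i - V i)) - ∑ i, ∑ j, e i j * (V i * (W j - V j)) ≤
      ∑ i, V i * (W i - V i) / W i * c i := by
  have hr0 : ∀ i, 0 ≤ V i * (W i - V i) / W i := fun i =>
    div_nonneg (mul_nonneg (hV0 i) (sub_nonneg.2 (hVW i))) (hW i).le
  have hrW : ∀ i, V i * (W i - V i) / W i * W i = V i * (W i - V i) := fun i =>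
    div_mul_cancel₀ _ (hW i).ne'
  have hSS : (∑ i, ∑ j, (e i j * (V i * (W i - V i) / W i * W j)
      - e i j * (V i * (W j - V j)))) ≤ 0 := by
    set F : Q0 → Q0 → ℚ := fun i j => e i j * (V i * (W i - V i) / W i * W j)
      - e i j * (V i * (W j - V j)) with hF
    have hswap : ∑ i, ∑ j, F i j = ∑ i, ∑ j, F j i := Finset.sum_comm
    have h2 : (∑ i, ∑ j, F i j) + (∑ i, ∑ j, F i j) = ∑ i, ∑ j, (F i j + F j i) := by
      nth_rewrite 2 [hswap]
      rw [← Finset.sum_add_distrib]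
      apply Finset.sum_congr rfl
      intro i _
      rw [← Finset.sum_add_distrib]
    have h3 : ∑ i, ∑ j, (F i j + F j i) ≤ 0 := by
      apply Finset.sum_nonpos
      intro i _
      apply Finset.sum_nonpos
      intro j _
      have hp := pair_ineq (W i) (W j) (V i) (V j) (hW i) (hW j)
      have heq : F i j + F j i = e i j * (V i * (W i - V i) / W i * W j
          + V j * (W j - V j) / W j * W i - V i * (W j - V j) - V j * (W i - V i)) := by
        rw [hF]
        simp only
        rw [hsym j i]
        ring
      rw [heq]
      exact mul_nonpos_of_nonneg_of_nonpos (he i j) hp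
    linarith
  calc (∑ i, V i * (W i - V i)) - ∑ i, ∑ j, e i j * (V i * (W j - V j))
      = (∑ i, V i * (W i - V i) / W i * W i)
        - ∑ i, ∑ j, e i j * (V i * (W j - V j)) := by
        rw [Finset.sum_congr rfl fun i _ => (hrW i).symm]
    _ ≤ (∑ i, V i * (W i - V i) / W i * (c i + ∑ j, e i j * W j))
        - ∑ i, ∑ j, e i j * (V i * (W j - V j)) := by
        apply sub_le_sub_right
        apply Finset.sum_le_sum
        intro i _
        exact mul_le_mul_of_nonneg_left (hkey i) (hr0 i)
    _ = (∑ i, V i * (W i - V i) / W i * c i)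
        + ∑ i, ∑ j, (e i j * (V i * (W i - V i) / W i * W j)
            - e i j * (V i * (W j - V j))) := by
        have hpt : ∀ i, V i * (W i - V i) / W i * (c i + ∑ j, e i j * W j)
            = V i * (W i - V i) / W i * c i
              + ∑ j, e i j * (V i * (W i - V i) / W i * W j) := by
          intro i
          rw [mul_add, Finset.mul_sum]
          congr 1
          apply Finset.sum_congr rfl
          intro j _
          ring
        rw [Finset.sum_congr rfl fun i _ => hpt i, Finset.sum_add_distrib,
          add_sub_assoc]
        congr 1
        rw [← Finset.sum_sub_distrib]
        apply Finset.sum_congr rfl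
        intro i _
        rw [← Finset.sum_sub_distrib]
    _ ≤ ∑ i, V i * (W i - V i) / W i * c i := by linarith [hSS]

lemma bform_single (E : Q0 → Q0 → ℤ) (δ : Q0 → ℕ) (i : Q0) :
    bform E (Pi.single i 1) (nvec δ) = ∑ j, E i j * δ j := by
  unfold bform
  rw [Finset.sum_eq_single i]
  · apply Finset.sum_congr rfl
    intro j _
    simp [nvec]
  · intro b _ hb
    apply Finset.sum_eq_zero
    intro j _
    simp [Pi.single_eq_of_ne hb]
  · intro h
    exact absurd (Finset.mem_univ i) h

lemma exists_neighbor (E : Q0 → Q0 → ℤ) (hdiag : ∀ i, E i i = 1)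
    (δ : Q0 → ℕ) (i : Q0)
    (h : bform E (Pi.single i 1) (nvec δ) < 0) :
    ∃ j, j ≠ i ∧ E i j < 0 ∧ δ j ≠ 0 := by
  by_contra hc
  push_neg at hc
  rw [bform_single] at h
  have h0 : (0:ℤ) ≤ ∑ j, E i j * δ j := by
    apply Finset.sum_nonneg
    intro j _
    by_cases hji : j = i
    · subst hji
      rw [hdiag]
      positivity
    · by_cases hEj : E i j < 0
      · rw [hc j hji hEj]
        simp
      · push_neg at hEj
        exact mul_nonneg hEj (by positivity)
  omega

lemma crossing (E : Q0 → Q0 → ℤ) (hsymm : ∀ i j, E i j = E j i) (hdiag : ∀ i, E i i = 1)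
    (δ : Q0 → ℕ) (hδ : condStar E δ)
    (P : Q0 → Prop) {a b : Q0} (ha : P a) (hb : ¬ P b) :
    ∃ x y, E x y < 0 ∧ P x ∧ ¬ P y ∧ (δ x ≠ 0 ∨ δ y ≠ 0) := by
  have hadjneg : ∀ x y : Q0, (quivGraph E).Adj x y → E x y < 0 := by
    intro x y hxy
    rcases hxy.2 with h | h
    · exact h
    · rw [hsymm]; exact h
  by_cases hA1 : ∃ a', δ a' ≠ 0 ∧ P a'
  · by_cases hA2 : ∃ b', δ b' ≠ 0 ∧ ¬ P b'
    · obtain ⟨a', hda, hPa⟩ := hA1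
      obtain ⟨b', hdb, hPb⟩ := hA2
      have hcross : ∀ (u w : {i : Q0 // δ i ≠ 0}), P u.1 → ¬ P w.1 →
          (suppGraph E δ).Reachable u w →
          ∃ x y, E x y < 0 ∧ P x ∧ ¬ P y ∧ (δ x ≠ 0 ∨ δ y ≠ 0) := by
        intro u w hu hw hr
        obtain ⟨walk⟩ := hr
        obtain ⟨x, y, hadj, hPx, hPy⟩ :=
          walk_crossing (suppGraph E δ) (fun z => P z.1) walk hu hw
        exact ⟨x.1, y.1, hadjneg _ _ hadj, hPx, hPy, Or.inl x.2⟩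
      rcases hδ.2 ⟨a', hda⟩ ⟨b', hdb⟩ with hreach | ⟨x, y, hax, hby, hxy⟩
      · exact hcross _ _ hPa hPb hreach
      · by_cases hPx : P x.1
        · by_cases hPy : P y.1
          · exact hcross _ _ hPy hPb hby.symm
          · rcases hxy with hadjxy | ⟨w₀, hwx, hwy⟩
            · exact ⟨x.1, y.1, hadjneg _ _ hadjxy, hPx, hPy, Or.inl x.2⟩
            · by_cases hPw : P w₀
              · exact ⟨w₀, y.1, hadjneg _ _ hwy, hPw, hPy, Or.inr y.2⟩
              · exact ⟨x.1, w₀, hadjneg _ _ hwx.symm, hPx, hPw, Or.inl x.2⟩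
        · exact hcross _ _ hPa hPx hax
    · push_neg at hA2
      obtain ⟨j, hji, hEj, hdj⟩ := exists_neighbor E hdiag δ b (hδ.1 b)
      refine ⟨j, b, ?_, hA2 j hdj, hb, Or.inl hdj⟩
      rw [hsymm]; exact hEj
  · push_neg at hA1
    obtain ⟨j, hji, hEj, hdj⟩ := exists_neighbor E hdiag δ a (hδ.1 a)
    exact ⟨a, j, hEj, ha, hA1 j hdj, Or.inr hdj⟩

end AuxLemmas

set_option maxHeartbeats 1000000 in
/-- Lemma 3.2: for a symmetric quiver without loops (encoded by `E` with unit diagonal and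
nonpositive off-diagonal entries), `δ` satisfying (∗) and `d` of full support,
`max_{0 < v < d + nδ} ⟨v, d + nδ - v⟩ → -∞` as `n → ∞`. -/
theorem form_max_tendsto_atBot
    {Q0 : Type*} [Fintype Q0] [DecidableEq Q0] [Nonempty Q0]
    (E : Q0 → Q0 → ℤ) (hsymm : ∀ i j, E i j = E j i)
    (hdiag : ∀ i, E i i = 1) (hoff : ∀ i j, i ≠ j → E i j ≤ 0)
    (δ : Q0 → ℕ) (hδ : condStar E δ)
    (d : Q0 → ℕ) (hd : ∀ i, 1 ≤ d i) :
    ∀ M : ℤ, ∃ N : ℕ, ∀ n ≥ N, ∀ v : Q0 → ℕ,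
      (∀ i, v i ≤ d i + n * δ i) → v ≠ 0 → v ≠ (fun i => d i + n * δ i) →
        bform E (nvec v) (fun i => ((d i : ℤ) + n * δ i) - v i) ≤ -M := by
  classical
  intro M
  set D := Finset.univ.sup d with hD
  refine ⟨D + 2 * M.toNat + 2, ?_⟩
  intro n hn v hvle hv0 hvw
  have hdD : ∀ i, d i ≤ D := fun i => Finset.le_sup (Finset.mem_univ i)
  have hnZ : (D:ℤ) + 2 * (M.toNat:ℤ) + 2 ≤ (n:ℤ) := by exact_mod_cast hn
  have hMt : M ≤ (M.toNat:ℤ) := Int.self_le_toNat M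
  have ht0 : (0:ℤ) ≤ (M.toNat:ℤ) := by positivity
  have hD0 : (0:ℤ) ≤ (D:ℤ) := by positivity
  by_cases hcase : ∃ p, v p ≠ 0 ∧ v p ≠ d p + n * δ p
  · -- the "interior" case: some coordinate strictly between 0 and w
    obtain ⟨p, hp0, hpw⟩ := hcase
    set V : Q0 → ℚ := fun i => (v i : ℚ) with hV
    set W : Q0 → ℚ := fun i => (d i : ℚ) + (n:ℚ) * (δ i : ℚ) with hW
    set e : Q0 → Q0 → ℚ := fun i j => if i = j then 0 else -(E i j : ℚ) with he
    clear_value V W e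
    have hWpos : ∀ i, 0 < W i := by
      intro i
      have h1 : (1:ℚ) ≤ (d i:ℚ) := by exact_mod_cast hd i
      have h2 : (0:ℚ) ≤ (n:ℚ) * (δ i:ℚ) := by positivity
      rw [hW]
      dsimp only
      linarith
    have hV0 : ∀ i, 0 ≤ V i := by
      intro i
      rw [hV]
      dsimp only
      positivity
    have hVW : ∀ i, V i ≤ W i := by
      intro i
      rw [hV, hW]
      dsimp only
      have := hvle i
      push_cast
      exact_mod_cast this
    have he0 : ∀ i j, 0 ≤ e i j := by
      intro i j
      rw [he]
      dsimp only
      by_cases h : i = j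
      · simp [h]
      · simp only [h, if_false]
        rw [neg_nonneg]
        exact_mod_cast hoff i j h
    have hesym : ∀ i j, e i j = e j i := by
      intro i j
      rw [he]
      dsimp only
      by_cases h : i = j
      · simp [h]
      · have h' : ¬ j = i := fun hh => h hh.symm
        simp only [h, h', if_false]
        rw [hsymm]
    have hEsplit : ∀ i j, (E i j : ℚ) = (if i = j then 1 else 0) - e i j := by
      intro i j
      rw [he]
      dsimp only
      by_cases h : i = j
      · subst h
        simp [hdiag i]
      · simp [h]
    have hstar : ∀ i, (∑ j, E i j * (δ j:ℤ)) ≤ -1 := by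
      intro i
      have h := hδ.1 i
      rw [bform_single] at h
      omega
    have hstarQ : ∀ i, (δ i:ℚ) ≤ -1 + ∑ j, e i j * (δ j:ℚ) := by
      intro i
      have h : (∑ j, (E i j:ℚ) * (δ j:ℚ)) ≤ -1 := by exact_mod_cast hstar i
      have hsplit : (∑ j, (E i j:ℚ) * (δ j:ℚ))
          = (δ i:ℚ) - ∑ j, e i j * (δ j:ℚ) := by
        have hpt : ∀ j, (E i j:ℚ) * (δ j:ℚ)
            = (if i = j then (δ j:ℚ) else 0) - e i j * (δ j:ℚ) := by
          intro j
          rw [hEsplit i j]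
          by_cases h' : i = j
          · subst h'
            have h0 : e i i = 0 := by rw [he]; simp
            simp [h0]
          · simp only [h', if_false]
            ring
        rw [Finset.sum_congr rfl fun j _ => hpt j, Finset.sum_sub_distrib]
        congr 1
        simp
      rw [hsplit] at h
      linarith
    have hkey : ∀ i, W i ≤ ((d i:ℚ) - (n:ℚ)) + ∑ j, e i j * W j := by
      intro i
      have h1 := hstarQ i
      have h3 : (n:ℚ) * ∑ j, e i j * (δ j:ℚ) = ∑ j, e i j * ((n:ℚ) * δ j) := by
        rw [Finset.mul_sum]
        apply Finset.sum_congr rfl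
        intro j _
        ring
      have h2 : (n:ℚ) * (δ i:ℚ) ≤ -(n:ℚ) + ∑ j, e i j * ((n:ℚ) * δ j) :=
        calc (n:ℚ) * (δ i:ℚ)
            ≤ (n:ℚ) * (-1 + ∑ j, e i j * (δ j:ℚ)) :=
              mul_le_mul_of_nonneg_left h1 (by positivity)
          _ = -(n:ℚ) + (n:ℚ) * ∑ j, e i j * (δ j:ℚ) := by ring
          _ = -(n:ℚ) + ∑ j, e i j * ((n:ℚ) * δ j) := by rw [h3]
      have h4 : ∑ j, e i j * ((n:ℚ) * δ j) ≤ ∑ j, e i j * W j := by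
        apply Finset.sum_le_sum
        intro j _
        apply mul_le_mul_of_nonneg_left _ (he0 i j)
        rw [hW]
        dsimp only
        have : (0:ℚ) ≤ (d j:ℚ) := by positivity
        linarith
      have hWi : W i = (d i:ℚ) + (n:ℚ) * (δ i:ℚ) := by rw [hW]
      rw [hWi]
      linarith
    have step1 : ((bform E (nvec v) fun i => ((d i : ℤ) + n * δ i) - v i : ℤ) : ℚ)
        = ∑ i, ∑ j, V i * (E i j : ℚ) * (W j - V j) := by
      simp only [bform, nvec]
      push_cast
      apply Finset.sum_congr rfl
      intro i _
      apply Finset.sum_congr rfl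
      intro j _
      rw [hV, hW]
    have step2 : (∑ i, ∑ j, V i * (E i j : ℚ) * (W j - V j))
        = (∑ i, V i * (W i - V i)) - ∑ i, ∑ j, e i j * (V i * (W j - V j)) := by
      have hpt : ∀ i j, V i * (E i j:ℚ) * (W j - V j)
          = (if i = j then V i * (W j - V j) else 0) - e i j * (V i * (W j - V j)) := by
        intro i j
        rw [hEsplit i j]
        by_cases h : i = j
        · subst h
          have h0 : e i i = 0 := by rw [he]; simp
          simp [h0]
        · simp only [h, if_false]
          ring
      have hin : ∀ i, ∑ j, ((if i = j then V i * (W j - V j) else 0)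
          - e i j * (V i * (W j - V j)))
          = V i * (W i - V i) - ∑ j, e i j * (V i * (W j - V j)) := by
        intro i
        rw [Finset.sum_sub_distrib]
        congr 1
        simp
      rw [Finset.sum_congr rfl fun i _ => Finset.sum_congr rfl fun j _ => hpt i j,
        Finset.sum_congr rfl fun i _ => hin i, Finset.sum_sub_distrib]
    have main := qcalc e he0 hesym W V (fun i => (d i:ℚ) - (n:ℚ)) hWpos hV0 hVW hkey
    have hTle : ((bform E (nvec v) fun i => ((d i : ℤ) + n * δ i) - v i : ℤ) : ℚ)
        ≤ ∑ i, V i * (W i - V i) / W i * ((d i:ℚ) - (n:ℚ)) := by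
      rw [step1, step2]
      exact main
    have hcle : ∀ i, (d i:ℚ) - (n:ℚ) ≤ 0 := by
      intro i
      have h1 : d i ≤ n := by
        have := hdD i
        omega
      rw [sub_nonpos]
      exact_mod_cast h1
    have hterm : ∀ i, V i * (W i - V i) / W i * ((d i:ℚ) - (n:ℚ)) ≤ 0 := by
      intro i
      apply mul_nonpos_of_nonneg_of_nonpos _ (hcle i)
      exact div_nonneg (mul_nonneg (hV0 i) (sub_nonneg.2 (hVW i))) (hWpos i).le
    have hsingle : (∑ i, V i * (W i - V i) / W i * ((d i:ℚ) - (n:ℚ)))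
        ≤ V p * (W p - V p) / W p * ((d p:ℚ) - (n:ℚ)) := by
      have hsum := Finset.add_sum_erase Finset.univ
        (fun i => V i * (W i - V i) / W i * ((d i:ℚ) - (n:ℚ))) (Finset.mem_univ p)
      have h2 : ∑ i ∈ Finset.univ.erase p,
          V i * (W i - V i) / W i * ((d i:ℚ) - (n:ℚ)) ≤ 0 :=
        Finset.sum_nonpos fun i _ => hterm i
      linarith [hsum]
    have hVp1 : (1:ℚ) ≤ V p := by
      rw [hV]
      dsimp only
      exact_mod_cast Nat.one_le_iff_ne_zero.mpr hp0
    have hUp1 : V p + 1 ≤ W p := by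
      have h1 : v p + 1 ≤ d p + n * δ p := by
        have := hvle p
        omega
      rw [hV, hW]
      dsimp only
      push_cast
      exact_mod_cast h1
    have hrp : (1/2:ℚ) ≤ V p * (W p - V p) / W p := by
      rw [le_div_iff₀ (hWpos p)]
      nlinarith [mul_nonneg (by linarith : (0:ℚ) ≤ V p - 1)
        (by linarith : (0:ℚ) ≤ W p - V p - 1), hUp1, hVp1]
    have hfp : V p * (W p - V p) / W p * ((d p:ℚ) - (n:ℚ))
        ≤ (1/2) * ((d p:ℚ) - (n:ℚ)) :=
      mul_le_mul_of_nonpos_right hrp (hcle p)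
    have hfinal : 2 * bform E (nvec v) (fun i => ((d i:ℤ) + n * δ i) - v i)
        ≤ (d p:ℤ) - (n:ℤ) := by
      have hq : ((2 * bform E (nvec v) (fun i => ((d i:ℤ) + n * δ i) - v i) : ℤ) : ℚ)
          ≤ (d p:ℚ) - (n:ℚ) := by
        push_cast
        linarith [hTle, hsingle, hfp]
      exact_mod_cast hq
    have hdp : (d p:ℤ) ≤ (D:ℤ) := by exact_mod_cast hdD p
    linarith [hfinal, hdp, hnZ, hMt]
  · -- the "boundary" case: every coordinate is 0 or maximal
    push_neg at hcase
    obtain ⟨a, hva⟩ := Function.ne_iff.mp hv0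
    obtain ⟨b, hvb⟩ := Function.ne_iff.mp hvw
    have hvb0 : v b = 0 := by
      by_contra h
      exact hvb (hcase b h)
    have hnb : ¬ (v b ≠ 0) := fun h => h hvb0
    obtain ⟨x, y, hExy, hPx, hPy, hA⟩ :=
      crossing E hsymm hdiag δ hδ (fun i => v i ≠ 0) hva hnb
    have hvx : v x = d x + n * δ x := hcase x hPx
    have hvy : v y = 0 := not_not.mp hPy
    have hterm : ∀ i j, (v i:ℤ) * E i j * (((d j:ℤ) + n * δ j) - v j) ≤ 0 := by
      intro i j
      have hz : (0:ℤ) ≤ ((d j:ℤ) + n * δ j) - v j := by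
        have h := hvle j
        have h' : (v j:ℤ) ≤ (d j:ℤ) + (n:ℤ) * (δ j:ℤ) := by exact_mod_cast h
        linarith
      by_cases hij : i = j
      · subst hij
        rcases eq_or_ne (v i) 0 with h0 | h0
        · simp [h0]
        · have hvi : v i = d i + n * δ i := hcase i h0
          have hz0 : ((d i:ℤ) + n * δ i) - v i = 0 := by
            rw [hvi]
            push_cast
            ring
          rw [hz0]
          simp
      · have hE := hoff i j hij
        have h1 : (0:ℤ) ≤ (v i:ℤ) := by positivity
        nlinarith [mul_nonneg h1 hz]
    have hrow : ∀ i, (∑ j, (v i:ℤ) * E i j * (((d j:ℤ) + n * δ j) - v j)) ≤ 0 :=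
      fun i => Finset.sum_nonpos fun j _ => hterm i j
    have hT1 : bform E (nvec v) (fun i => ((d i:ℤ) + n * δ i) - v i)
        ≤ ∑ j, (v x:ℤ) * E x j * (((d j:ℤ) + n * δ j) - v j) := by
      have hbf : bform E (nvec v) (fun i => ((d i:ℤ) + n * δ i) - v i)
          = ∑ i, ∑ j, (v i:ℤ) * E i j * (((d j:ℤ) + n * δ j) - v j) := by
        simp only [bform, nvec]
      have hsum := Finset.add_sum_erase Finset.univ
        (fun i => ∑ j, (v i:ℤ) * E i j * (((d j:ℤ) + n * δ j) - v j)) (Finset.mem_univ x)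
      have h2 : ∑ i ∈ Finset.univ.erase x,
          (∑ j, (v i:ℤ) * E i j * (((d j:ℤ) + n * δ j) - v j)) ≤ 0 :=
        Finset.sum_nonpos fun i _ => hrow i
      rw [hbf]
      linarith [hsum]
    have hT2 : (∑ j, (v x:ℤ) * E x j * (((d j:ℤ) + n * δ j) - v j))
        ≤ (v x:ℤ) * E x y * (((d y:ℤ) + n * δ y) - v y) := by
      have hsum := Finset.add_sum_erase Finset.univ
        (fun j => (v x:ℤ) * E x j * (((d j:ℤ) + n * δ j) - v j)) (Finset.mem_univ y)
      have h2 : ∑ j ∈ Finset.univ.erase y,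
          (v x:ℤ) * E x j * (((d j:ℤ) + n * δ j) - v j) ≤ 0 :=
        Finset.sum_nonpos fun j _ => hterm x j
      linarith [hsum]
    have hEle : E x y ≤ -1 := by omega
    have hax : (1:ℤ) ≤ (d x:ℤ) + (n:ℤ) * (δ x:ℤ) := by
      have h1 : (1:ℤ) ≤ (d x:ℤ) := by exact_mod_cast hd x
      have h2 : (0:ℤ) ≤ (n:ℤ) * (δ x:ℤ) := by positivity
      linarith
    have hby : (1:ℤ) ≤ (d y:ℤ) + (n:ℤ) * (δ y:ℤ) := by
      have h1 : (1:ℤ) ≤ (d y:ℤ) := by exact_mod_cast hd y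
      have h2 : (0:ℤ) ≤ (n:ℤ) * (δ y:ℤ) := by positivity
      linarith
    have hab : (n:ℤ) ≤ ((d x:ℤ) + (n:ℤ) * (δ x:ℤ)) * ((d y:ℤ) + (n:ℤ) * (δ y:ℤ)) := by
      rcases hA with h | h
      · have h1 : (1:ℤ) ≤ (δ x:ℤ) := by exact_mod_cast Nat.one_le_iff_ne_zero.mpr h
        have h2 : (0:ℤ) ≤ (d x:ℤ) := by positivity
        have h3 : (0:ℤ) ≤ (n:ℤ) := by positivity
        have h4 : (n:ℤ) * 1 ≤ (n:ℤ) * (δ x:ℤ) := mul_le_mul_of_nonneg_left h1 h3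
        have h5 : (n:ℤ) ≤ (d x:ℤ) + (n:ℤ) * (δ x:ℤ) := by linarith
        calc (n:ℤ) ≤ (d x:ℤ) + (n:ℤ) * (δ x:ℤ) := h5
          _ ≤ ((d x:ℤ) + (n:ℤ) * (δ x:ℤ)) * ((d y:ℤ) + (n:ℤ) * (δ y:ℤ)) :=
            le_mul_of_one_le_right (by linarith) hby
      · have h1 : (1:ℤ) ≤ (δ y:ℤ) := by exact_mod_cast Nat.one_le_iff_ne_zero.mpr h
        have h2 : (0:ℤ) ≤ (d y:ℤ) := by positivity
        have h3 : (0:ℤ) ≤ (n:ℤ) := by positivity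
        have h4 : (n:ℤ) * 1 ≤ (n:ℤ) * (δ y:ℤ) := mul_le_mul_of_nonneg_left h1 h3
        have h5 : (n:ℤ) ≤ (d y:ℤ) + (n:ℤ) * (δ y:ℤ) := by linarith
        calc (n:ℤ) ≤ (d y:ℤ) + (n:ℤ) * (δ y:ℤ) := h5
          _ ≤ ((d x:ℤ) + (n:ℤ) * (δ x:ℤ)) * ((d y:ℤ) + (n:ℤ) * (δ y:ℤ)) :=
            le_mul_of_one_le_left (by linarith) hax
    have harith : ∀ a b ee : ℤ, 1 ≤ a → 1 ≤ b → ee ≤ -1 → (n:ℤ) ≤ a * b →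
        a * ee * b ≤ -(n:ℤ) := by
      intro a b ee h1 h2 h3 h4
      nlinarith [mul_nonneg (mul_nonneg (by linarith : (0:ℤ) ≤ a)
        (by linarith : (0:ℤ) ≤ b)) (by linarith : (0:ℤ) ≤ -1 - ee)]
    have hlast : (v x:ℤ) * E x y * (((d y:ℤ) + n * δ y) - v y) ≤ -(n:ℤ) := by
      calc (v x:ℤ) * E x y * (((d y:ℤ) + n * δ y) - v y)
          = ((d x:ℤ) + (n:ℤ) * (δ x:ℤ)) * E x y * ((d y:ℤ) + (n:ℤ) * (δ y:ℤ)) := by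
            rw [hvx, hvy]
            push_cast
            ring
        _ ≤ -(n:ℤ) := harith _ _ _ hax hby hEle hab
    have hMn : M ≤ (n:ℤ) := by linarith
    linarith [hT1, hT2, hlast]
end

section
/- Let Q0 be a finite type, E : Q0 → Q0 → ℚ a symmetric matrix, and τ, v : Q0 → ℚ vectors with τ i ≠ 0 for every i. Then 2 · Σ_{i,j} v i * E i j * (τ j − v j) = 2 · Σ_i v i * (1 − v i / τ i) * (Σ_j E i j * τ j) + Σ_{i ≠ j} E i j * τ i * τ j * (v i / τ i − v j / τ j)^2. -/
open Finset

/-- The algebraic identity from the proof of Lemma 3.2: for a symmetric matrix `E` over `ℚ`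
and vectors `τ, v` with all `τ i ≠ 0`,
`2⟨v, τ - v⟩ = 2 Σ_i v_i (1 - v_i/τ_i) ⟨e_i, τ⟩ + Σ_{i ≠ j} E_{ij} τ_i τ_j (v_i/τ_i - v_j/τ_j)²`. -/
theorem two_mul_form_eq_diag_add_offdiag
    {Q0 : Type*} [Fintype Q0] [DecidableEq Q0]
    (E : Q0 → Q0 → ℚ) (hsymm : ∀ i j, E i j = E j i)
    (τ v : Q0 → ℚ) (hτ : ∀ i, τ i ≠ 0) :
    2 * ∑ i, ∑ j, v i * E i j * (τ j - v j) =
      2 * ∑ i, v i * (1 - v i / τ i) * (∑ j, E i j * τ j) +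
        ∑ i, ∑ j ∈ Finset.univ.filter (fun j => j ≠ i),
          E i j * τ i * τ j * (v i / τ i - v j / τ j) ^ 2 := by
  set F : Q0 → Q0 → ℚ := fun i j =>
    2 * (v i * E i j * (τ j - v j)) - 2 * (v i * (1 - v i / τ i) * (E i j * τ j)) with hF
  set G : Q0 → Q0 → ℚ := fun i j =>
    E i j * τ i * τ j * (v i / τ i - v j / τ j) ^ 2 with hG
  -- diagonal terms of G vanish
  have h1 : ∀ i : Q0, ∑ j ∈ Finset.univ.filter (fun j => j ≠ i), G i j = ∑ j, G i j := by
    intro i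
    rw [Finset.sum_filter]
    refine Finset.sum_congr rfl fun j _ => ?_
    by_cases h : j = i
    · subst h; simp [hG]
    · simp [h]
  -- symmetrized termwise identity
  have hFG : ∀ i j, F i j + F j i = G i j + G j i := by
    intro i j
    simp only [hF, hG]
    rw [hsymm j i]
    field_simp [hτ i, hτ j]
    ring
  have hswap : ∀ (f : Q0 → Q0 → ℚ), ∑ i, ∑ j, f i j = ∑ i, ∑ j, f j i :=
    fun f => Finset.sum_comm
  have hsum : ∑ i, ∑ j, F i j = ∑ i, ∑ j, G i j := by
    have h2 : ∑ i, ∑ j, (F i j + F j i) = ∑ i, ∑ j, (G i j + G j i) :=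
      Finset.sum_congr rfl fun i _ => Finset.sum_congr rfl fun j _ => hFG i j
    simp only [Finset.sum_add_distrib] at h2
    rw [← hswap F] at h2
    rw [← hswap G] at h2
    linarith
  have expand : ∑ i, ∑ j, F i j =
      2 * (∑ i, ∑ j, v i * E i j * (τ j - v j)) -
        2 * ∑ i, v i * (1 - v i / τ i) * (∑ j, E i j * τ j) := by
    simp only [hF, Finset.sum_sub_distrib, ← Finset.mul_sum]
  rw [expand] at hsum
  have h1' : ∀ i : Q0, ∑ j ∈ Finset.univ.filter (fun j => j ≠ i),
      E i j * τ i * τ j * (v i / τ i - v j / τ j) ^ 2 = ∑ j, G i j := h1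
  simp only [h1, h1']
  linarith [hsum]
end

section
/- Let Q0 be a finite nonempty type and let d : Q0 → ℕ be a nonzero dimension vector. Then the greatest common divisor of the values {d i : i ∈ Q0} equals 1 if and only if there exists χ : Q0 → ℤ such that for every dimension vector v : Q0 → ℕ with v ≤ d (componentwise), v ≠ 0 and v ≠ d, one has (Σ_i χ i * v i) * (Σ_i d i) ≠ (Σ_i χ i * d i) * (Σ_i v i). -/
open Finset

lemma finset_bezout {ι : Type*} [DecidableEq ι] (s : Finset ι) (d : ι → ℕ) :
    ∃ χ : ι → ℤ, ∑ i ∈ s, χ i * d i = s.gcd d := by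
  induction s using Finset.induction with
  | empty => exact ⟨0, by simp⟩
  | @insert a s ha ih =>
    obtain ⟨χ, hχ⟩ := ih
    refine ⟨fun i => if i = a then Nat.gcdA (d a) (s.gcd d)
      else Nat.gcdB (d a) (s.gcd d) * χ i, ?_⟩
    rw [Finset.sum_insert ha, Finset.gcd_insert]
    have h1 : ∑ i ∈ s, (if i = a then Nat.gcdA (d a) (s.gcd d)
        else Nat.gcdB (d a) (s.gcd d) * χ i) * d i
        = Nat.gcdB (d a) (s.gcd d) * ∑ i ∈ s, χ i * d i := by
      rw [Finset.mul_sum]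
      refine Finset.sum_congr rfl fun i hi => ?_
      rw [if_neg (by rintro rfl; exact ha hi)]; ring
    rw [h1, hχ]
    simp only [eq_self_iff_true, if_true, gcd_eq_nat_gcd]
    have := Nat.gcd_eq_gcd_ab (d a) (s.gcd d)
    linarith

/-- A generic character (with respect to `d`) exists if and only if `d` is indivisible:
the gcd of the entries of a nonzero dimension vector `d` is `1` iff there is `χ : Q0 → ℤ`
whose slope separates every proper nonzero subvector `v ≤ d` from `d` (in cross-multiplied
form). -/
theorem gcd_eq_one_iff_exists_generic_character
    {Q0 : Type*} [Fintype Q0] [Nonempty Q0] (d : Q0 → ℕ) (hd : d ≠ 0) :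
    Finset.univ.gcd d = 1 ↔
      ∃ χ : Q0 → ℤ, ∀ v : Q0 → ℕ, (∀ i, v i ≤ d i) → v ≠ 0 → v ≠ d →
        (∑ i, χ i * v i) * (∑ i, (d i : ℤ)) ≠ (∑ i, χ i * d i) * (∑ i, (v i : ℤ)) := by
  classical
  constructor
  · intro hgcd
    obtain ⟨χ, hχ⟩ := finset_bezout (Finset.univ) d
    rw [hgcd] at hχ
    push_cast at hχ
    refine ⟨χ, fun v hvle hv0 hvd heq => ?_⟩
    rw [hχ, one_mul] at heq
    -- 0 < ∑ v < ∑ d, yet ∑ d divides ∑ v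
    obtain ⟨j, hj⟩ : ∃ j, v j ≠ 0 := by
      by_contra h; push_neg at h; exact hv0 (funext h)
    obtain ⟨k, hk⟩ : ∃ k, v k < d k := by
      by_contra h; push_neg at h
      exact hvd (funext fun i => le_antisymm (hvle i) (h i))
    have hS : 0 < ∑ i, (v i : ℤ) := by
      have : 0 < ∑ i, v i :=
        Finset.sum_pos' (fun i _ => Nat.zero_le _) ⟨j, Finset.mem_univ j, Nat.pos_of_ne_zero hj⟩
      exact_mod_cast this
    have hSN : (∑ i, (v i : ℤ)) < ∑ i, (d i : ℤ) := by
      have : ∑ i, v i < ∑ i, d i :=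
        Finset.sum_lt_sum (fun i _ => hvle i) ⟨k, Finset.mem_univ k, hk⟩
      exact_mod_cast this
    have hdvd : (∑ i, (d i : ℤ)) ∣ ∑ i, (v i : ℤ) := ⟨∑ i, χ i * v i, by linarith [heq]⟩
    have := Int.le_of_dvd hS hdvd
    linarith
  · rintro ⟨χ, hχ⟩
    by_contra hg1
    have hg0 : Finset.univ.gcd d ≠ 0 := fun h =>
      hd (funext fun i => Finset.gcd_eq_zero_iff.mp h i (Finset.mem_univ i))
    set g := Finset.univ.gcd d with hg
    have hg2 : 2 ≤ g := by omega
    set v : Q0 → ℕ := fun i => d i / g with hv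
    have hdv : ∀ i, d i = g * v i := fun i =>
      (Nat.mul_div_cancel' (Finset.gcd_dvd (Finset.mem_univ i)) ).symm
    obtain ⟨j, hj⟩ : ∃ j, d j ≠ 0 := by
      by_contra h; push_neg at h; exact hd (funext h)
    have hvj : v j ≠ 0 := by
      intro h; rw [hdv j, h, mul_zero] at hj; exact hj rfl
    have hvle : ∀ i, v i ≤ d i := fun i => Nat.div_le_self _ _
    have hv0 : v ≠ 0 := fun h => hvj (by rw [h]; rfl)
    have hvd : v ≠ d := by
      intro h
      have : d j = g * d j := by conv_lhs => rw [hdv j, h]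
      nlinarith [Nat.pos_of_ne_zero hj]
    apply hχ v hvle hv0 hvd
    have h1 : ∑ i, χ i * (d i : ℤ) = g * ∑ i, χ i * v i := by
      rw [Finset.mul_sum]
      refine Finset.sum_congr rfl fun i _ => ?_
      rw [hdv i]; push_cast; ring
    have h2 : ∑ i, (d i : ℤ) = g * ∑ i, (v i : ℤ) := by
      rw [Finset.mul_sum]
      refine Finset.sum_congr rfl fun i _ => ?_
      rw [hdv i]; push_cast; ring
    rw [h1, h2]; ring
end

section
/- Let Q0 be a finite nonempty type and C : Q0 → Q0 → ℤ a symmetric matrix with C i i = 2 for all i and C i j ≤ 0 for i ≠ j, with form (x, y) := Σ_{i,j} x i * C i j * y j. Let δ : Q0 → ℕ satisfy condition (∗) for C and let d : Q0 → ℕ have full support (d i ≥ 1 for every i). Then there exists N ∈ ℕ such that for all n ≥ N, writing τ := d + n·δ: the maximum over all l ≥ 2 and all decompositions τ = d^1 + … + d^l into nonzero dimension vectors of the quantity (τ, τ) − Σ_{k=1}^l (d^k, d^k) equals the maximum over all dimension vectors v with v ≤ τ, v ≠ 0, v ≠ τ of 2·(v, τ − v); moreover this common maximum tends to −∞ as n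 → ∞. -/
open Finset

/-- The set of values `(τ,τ) - Σ_k (d^k, d^k)` over all decompositions of `τ` into `l ≥ 2`
nonzero dimension vectors. -/
def decompVals {Q0 : Type*} [Fintype Q0] (C : Q0 → Q0 → ℤ) (τ : Q0 → ℕ) : Set ℤ :=
  {z | ∃ l : ℕ, 2 ≤ l ∧ ∃ ds : Fin l → Q0 → ℕ,
    (∀ k, ds k ≠ 0) ∧ (∀ i, ∑ k, ds k i = τ i) ∧
      z = bform C (nvec τ) (nvec τ) - ∑ k, bform C (nvec (ds k)) (nvec (ds k))}

/-- The set of values `2 (v, τ - v)` over all dimension vectors `0 < v < τ`. -/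
def subVals {Q0 : Type*} [Fintype Q0] (C : Q0 → Q0 → ℤ) (τ : Q0 → ℕ) : Set ℤ :=
  {z | ∃ v : Q0 → ℕ, (∀ i, v i ≤ τ i) ∧ v ≠ 0 ∧ v ≠ τ ∧
    z = 2 * bform C (nvec v) (nvec τ - nvec v)}

set_option linter.unusedSectionVars false
set_option linter.unusedVariables false
set_option linter.unnecessarySeqFocus false
set_option maxHeartbeats 1000000

section Aux
variable {Q0 : Type*} [Fintype Q0] [DecidableEq Q0] (C : Q0 → Q0 → ℤ)

/-- row sum -/
def rowB (y : Q0 → ℤ) (i : Q0) : ℤ := ∑ j, C i j * y j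

lemma bform_expand (x y : Q0 → ℤ) : bform C x y = ∑ i, x i * rowB C y i := by
  simp [bform, rowB, Finset.mul_sum, mul_assoc]

lemma bform_single_left (i : Q0) (y : Q0 → ℤ) :
    bform C (Pi.single i 1) y = rowB C y i := by
  rw [bform_expand]
  rw [Finset.sum_eq_single i]
  · simp
  · intro b _ hb; simp [Pi.single_apply, hb]
  · simp

lemma bform_add_left (x x' y : Q0 → ℤ) :
    bform C (x + x') y = bform C x y + bform C x' y := by
  simp [bform, add_mul, Finset.sum_add_distrib]

lemma bform_sub_left (x x' y : Q0 → ℤ) :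
    bform C (x - x') y = bform C x y - bform C x' y := by
  simp [bform, sub_mul, Finset.sum_sub_distrib]

lemma bform_add_right (x y y' : Q0 → ℤ) :
    bform C x (y + y') = bform C x y + bform C x y' := by
  simp [bform, mul_add, Finset.sum_add_distrib]

lemma bform_sub_right (x y y' : Q0 → ℤ) :
    bform C x (y - y') = bform C x y - bform C x y' := by
  simp [bform, mul_sub, Finset.sum_sub_distrib]

lemma bform_zero_left (y : Q0 → ℤ) : bform C 0 y = 0 := by simp [bform]

lemma bform_comm (hsymm : ∀ i j, C i j = C j i) (x y : Q0 → ℤ) :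
    bform C x y = bform C y x := by
  rw [bform, Finset.sum_comm, bform]
  apply Finset.sum_congr rfl; intro i _
  apply Finset.sum_congr rfl; intro j _
  rw [hsymm j i]; ring

lemma bform_sum_left {ι : Type*} (s : Finset ι) (xs : ι → Q0 → ℤ) (y : Q0 → ℤ) :
    bform C (∑ k ∈ s, xs k) y = ∑ k ∈ s, bform C (xs k) y := by
  induction s using Finset.cons_induction with
  | empty => simp [bform_zero_left]
  | cons a s ha ih =>
      rw [Finset.sum_cons, bform_add_left, ih, Finset.sum_cons]

lemma two_identity (hsymm : ∀ i j, C i j = C j i) (a t : Q0 → ℤ) :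
    bform C t t - bform C a a - bform C (t - a) (t - a) = 2 * bform C a (t - a) := by
  have h := bform_comm C hsymm t a
  simp only [bform_sub_left, bform_sub_right] at *
  linarith

lemma four_identity (hsymm : ∀ i j, C i j = C j i) (a t : Q0 → ℤ) :
    4 * bform C a (t - a) = bform C t t - bform C (a + a - t) (a + a - t) := by
  have h := bform_comm C hsymm t a
  simp only [bform_sub_left, bform_sub_right, bform_add_left, bform_add_right] at *
  linarith

lemma sub_identity (hsymm : ∀ i j, C i j = C j i) (a b : Q0 → ℤ) :
    bform C a a - bform C b b = -(bform C (b - a) b) - bform C (b - a) a := by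
  have h := bform_comm C hsymm b a
  simp only [bform_sub_left] at *
  linarith


/-- The core minimization lemma (KKT argument): for `y` in the box `[0,τ]`, `y ≠ τ`,
the quadratic form at `y` exceeds its value at `τ` by at least `n - K - 1`. -/
lemma core (hsymm : ∀ i j, C i j = C j i) (hdiag : ∀ i, C i i = 2)
    (hoff : ∀ i j, i ≠ j → C i j ≤ 0)
    (τ : Q0 → ℤ) (n K : ℤ) (hn : K + 1 ≤ n)
    (hτ1 : ∀ i, 1 ≤ τ i) (hrow : ∀ i, rowB C τ i ≤ K - n) :
    ∀ y : Q0 → ℤ, (∀ i, 0 ≤ y i) → (∀ i, y i ≤ τ i) → y ≠ τ →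
      bform C τ τ + (n - K - 1) ≤ bform C y y := by
  intro y hy0 hyle hyτ
  classical
  set S : Finset (Q0 → ℤ) := (Fintype.piFinset fun i => Finset.Icc (0:ℤ) (τ i)).erase τ with hS
  have hymem : y ∈ S := by
    rw [hS, Finset.mem_erase]
    refine ⟨hyτ, ?_⟩
    rw [Fintype.mem_piFinset]
    exact fun i => Finset.mem_Icc.mpr ⟨hy0 i, hyle i⟩
  obtain ⟨m, hmS, hmin⟩ := S.exists_min_image (fun w => bform C w w) ⟨y, hymem⟩
  have hm' := Finset.mem_erase.mp hmS
  have hmbox := Fintype.mem_piFinset.mp hm'.2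
  have hm0 : ∀ i, 0 ≤ m i := fun i => (Finset.mem_Icc.mp (hmbox i)).1
  have hmle : ∀ i, m i ≤ τ i := fun i => (Finset.mem_Icc.mp (hmbox i)).2
  -- KKT: if τ i - m i > 0 then rowB C m i ≤ 1
  have hKKT : ∀ i, m i < τ i → rowB C m i ≤ 1 := by
    intro i _
    rcases eq_or_lt_of_le (hm0 i) with h0 | hpos
    · -- m i = 0 : rowB ≤ 0
      have : rowB C m i ≤ 0 := by
        apply Finset.sum_nonpos
        intro j _
        by_cases hij : j = i
        · subst hij; rw [← h0]; simp
        · exact mul_nonpos_of_nonpos_of_nonneg (hoff i j (Ne.symm hij)) (hm0 j)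
      linarith
    · -- m i > 0 : compare with m - e_i
      set m' : Q0 → ℤ := m - Pi.single i 1 with hm'def
      have hm'i : m' i = m i - 1 := by
        rw [hm'def, Pi.sub_apply, Pi.single_eq_same]
      have hm'ne : ∀ j, j ≠ i → m' j = m j := by
        intro j hj
        rw [hm'def, Pi.sub_apply, Pi.single_eq_of_ne hj, sub_zero]
      have hm'mem : m' ∈ S := by
        rw [hS, Finset.mem_erase]
        constructor
        · intro h
          have h2 := congrFun h i
          rw [hm'i] at h2
          have := hmle i
          omega
        · rw [Fintype.mem_piFinset]
          intro j
          rw [Finset.mem_Icc]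
          by_cases hij : j = i
          · subst hij
            rw [hm'i]
            constructor <;> [omega; linarith [hmle j]]
          · rw [hm'ne j hij]
            constructor <;> [exact hm0 j; exact hmle j]
      have hge := hmin m' hm'mem
      have hexp : bform C m' m' =
          bform C m m - 2 * rowB C m i + 2 := by
        have e1 : bform C (Pi.single i 1) m = rowB C m i := bform_single_left C i m
        have e2 : bform C m (Pi.single i 1) = rowB C m i := by
          rw [bform_comm C hsymm]; exact e1
        have e3 : bform C (Pi.single i 1) (Pi.single i 1) = 2 := by
          rw [bform_single_left]
          rw [rowB, Finset.sum_eq_single i]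
          · rw [Pi.single_eq_same, hdiag i]; ring
          · intro b _ hb; rw [Pi.single_eq_of_ne hb, mul_zero]
          · simp
        have e4 : bform C (m - Pi.single i 1) (m - Pi.single i 1)
            = bform C m m - bform C m (Pi.single i 1)
              - (bform C (Pi.single i 1) m - bform C (Pi.single i 1) (Pi.single i 1)) := by
          rw [bform_sub_left, bform_sub_right, bform_sub_right]
        rw [hm'def, e4, e1, e2, e3]; ring
      rw [hexp] at hge
      linarith
  -- now estimate
  set u : Q0 → ℤ := τ - m with hu
  have hu0 : ∀ i, 0 ≤ u i := fun i => by simp [hu]; linarith [hmle i]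
  obtain ⟨i0, hi0⟩ : ∃ i, m i ≠ τ i := Function.ne_iff.mp hm'.1
  have hui0 : 1 ≤ u i0 := by simp [hu]; have := hmle i0; omega
  have hsum1 : 1 ≤ ∑ i, u i := by
    calc (1:ℤ) ≤ u i0 := hui0
    _ ≤ ∑ i, u i := Finset.single_le_sum (fun i _ => hu0 i) (Finset.mem_univ i0)
  have hid : bform C m m - bform C τ τ = -(bform C u τ) - bform C u m :=
    sub_identity C hsymm m τ
  have hest1 : bform C u τ ≤ (∑ i, u i) * (K - n) := by
    rw [bform_expand, Finset.sum_mul]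
    apply Finset.sum_le_sum
    intro i _
    exact mul_le_mul_of_nonneg_left (hrow i) (hu0 i)
  have hest2 : bform C u m ≤ ∑ i, u i := by
    rw [bform_expand]
    apply Finset.sum_le_sum
    intro i _
    rcases eq_or_lt_of_le (hu0 i) with h0 | hpos
    · rw [← h0]; simp
    · have hlt : m i < τ i := by simp [hu] at hpos ⊢; linarith
      calc u i * rowB C m i ≤ u i * 1 :=
        mul_le_mul_of_nonneg_left (hKKT i hlt) (le_of_lt hpos)
      _ = u i := mul_one _
  have hmain : bform C τ τ + (n - K - 1) ≤ bform C m m := by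
    have h1 : (∑ i, u i) * (n - K - 1) ≤ -(bform C u τ) - bform C u m := by
      have : (∑ i, u i) * (n - K - 1) = -((∑ i, u i) * (K - n)) - (∑ i, u i) := by ring
      rw [this]
      linarith
    have h2 : (n - K - 1) ≤ (∑ i, u i) * (n - K - 1) := by
      have hnk : 0 ≤ n - K - 1 := by linarith
      nlinarith
    linarith
  calc bform C τ τ + (n - K - 1) ≤ bform C m m := hmain
  _ ≤ bform C y y := hmin y hymem

/-- From `⟨e_i, δ⟩ < 0` there is a neighbour of `i` in the support of `δ`. -/
lemma neighbor {δ : Q0 → ℕ} (hδ1 : ∀ i : Q0, bform C (Pi.single i 1) (nvec δ) < 0)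
    (i : Q0) : ∃ j, C i j < 0 ∧ δ j ≠ 0 := by
  have h := hδ1 i
  rw [bform_single_left] at h
  by_contra hc
  push_neg at hc
  have : (0:ℤ) ≤ rowB C (nvec δ) i := by
    apply Finset.sum_nonneg
    intro j _
    by_cases hCj : C i j < 0
    · have : δ j = 0 := hc j hCj
      simp [nvec, this]
    · push_neg at hCj
      exact mul_nonneg hCj (by simp [nvec])
  linarith

lemma cross_of_walk {δ : Q0 → ℕ} (P : Q0 → Prop) :
    ∀ {u x : {i : Q0 // δ i ≠ 0}} (_ : (suppGraph C δ).Walk u x),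
      P u.1 → ¬ P x.1 →
      ∃ a b : Q0, δ a ≠ 0 ∧ δ b ≠ 0 ∧ (quivGraph C).Adj a b ∧ P a ∧ ¬ P b := by
  intro u x W
  induction W with
  | nil => intro h1 h2; exact absurd h1 h2
  | @cons u t x hadj W ih =>
      intro h1 h2
      by_cases ht : P t.1
      · exact ih ht h2
      · exact ⟨u.1, t.1, u.2, t.2, hadj, h1, ht⟩

lemma pair_lemma (hsymm : ∀ i j, C i j = C j i) {δ : Q0 → ℕ} (hδ : condStar C δ)
    (P : Q0 → Prop) (hP : ∃ i, P i) (hN : ∃ i, ¬ P i) :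
    ∃ a b : Q0, C a b < 0 ∧ P a ∧ ¬ P b ∧ (δ a ≠ 0 ∨ δ b ≠ 0) := by
  classical
  have adjC : ∀ a b : Q0, (quivGraph C).Adj a b → C a b < 0 := by
    intro a b h
    rcases h.2 with h' | h'
    · exact h'
    · rw [hsymm a b]; exact h'
  by_cases hS : ∀ s, δ s ≠ 0 → P s
  · obtain ⟨j, hj⟩ := hN
    obtain ⟨k, hCk, hδk⟩ := neighbor C hδ.1 j
    exact ⟨k, j, by rw [hsymm]; exact hCk, hS k hδk, hj, Or.inl hδk⟩
  by_cases hS' : ∀ s, δ s ≠ 0 → ¬ P s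
  · obtain ⟨i, hi⟩ := hP
    obtain ⟨k, hCk, hδk⟩ := neighbor C hδ.1 i
    exact ⟨i, k, hCk, hi, hS' k hδk, Or.inr hδk⟩
  push_neg at hS hS'
  obtain ⟨q, hδq, hq⟩ := hS
  obtain ⟨p, hδp, hp⟩ := hS'
  -- both sides meet the support
  rcases hδ.2 ⟨p, hδp⟩ ⟨q, hδq⟩ with hreach | ⟨x, y, hx, hy, hlast⟩
  · obtain ⟨W⟩ := hreach
    obtain ⟨a, b, hδa, hδb, hadj, hPa, hPb⟩ := cross_of_walk C P W hp hq
    exact ⟨a, b, adjC a b hadj, hPa, hPb, Or.inl hδa⟩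
  · -- if the walk p → x crosses, done; else x on P side
    by_cases hPx : P x.1
    · by_cases hPy : P y.1
      · -- walk q → y goes from ¬P to P: crossing with ¬P predicate
        obtain ⟨W⟩ := hy
        obtain ⟨a, b, hδa, hδb, hadj, hPa, hPb⟩ :=
          cross_of_walk C (fun i => ¬ P i) W hq (by simpa using hPy)
        rw [not_not] at hPb
        exact ⟨b, a, adjC b a hadj.symm, hPb, hPa, Or.inl hδb⟩
      · rcases hlast with hadj | ⟨w, hw1, hw2⟩
        · exact ⟨x.1, y.1, adjC _ _ hadj, hPx, hPy, Or.inl x.2⟩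
        · by_cases hw : P w
          · exact ⟨w, y.1, adjC _ _ hw2, hw, hPy, Or.inr y.2⟩
          · exact ⟨x.1, w, adjC _ _ hw1.symm, hPx, hw, Or.inl x.2⟩
    · obtain ⟨W⟩ := hx
      obtain ⟨a, b, hδa, hδb, hadj, hPa, hPb⟩ := cross_of_walk C P W hp hPx
      exact ⟨a, b, adjC a b hadj, hPa, hPb, Or.inl hδa⟩

/-- extreme case bound -/
lemma ext_bound (hsymm : ∀ i j, C i j = C j i) (hoff : ∀ i j, i ≠ j → C i j ≤ 0)
    {δ : Q0 → ℕ} (hδ : condStar C δ) (τ v : Q0 → ℕ) (n : ℕ)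
    (hτ1 : ∀ i, 1 ≤ τ i) (hτδ : ∀ i, n * δ i ≤ τ i) (hvle : ∀ i, v i ≤ τ i)
    (hdich : ∀ i, v i = 0 ∨ v i = τ i) (hv0 : v ≠ 0) (hvτ : v ≠ τ) :
    bform C (nvec v) (nvec τ - nvec v) ≤ -(n:ℤ) := by
  classical
  set P : Q0 → Prop := fun i => v i = τ i with hPdef
  have hP : ∃ i, P i := by
    obtain ⟨i, hi⟩ := Function.ne_iff.mp hv0
    exact ⟨i, (hdich i).resolve_left (by simpa using hi)⟩
  have hN : ∃ i, ¬ P i := Function.ne_iff.mp hvτ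
  obtain ⟨a, b, hCab, hPa, hPb, hδab⟩ := pair_lemma C hsymm hδ P hP hN
  set w : Q0 → ℤ := nvec τ - nvec v with hw
  have hw0 : ∀ i, 0 ≤ w i := fun i => by
    simp [hw, nvec]; exact_mod_cast hvle i
  have hwa : ∀ i, P i → w i = 0 := fun i hi => by
    simp [hw, nvec, hPdef] at *; omega
  have hvb : ∀ i, ¬ P i → v i = 0 := fun i hi => (hdich i).resolve_right hi
  -- all terms nonpositive
  have hterm : ∀ i j, (v i : ℤ) * C i j * w j ≤ 0 := by
    intro i j
    by_cases hvi : v i = 0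
    · simp [hvi]
    · have hPi : P i := (hdich i).resolve_left hvi
      by_cases hPj : P j
      · rw [hwa j hPj, mul_zero]
      · have hij : i ≠ j := by intro h; rw [← h] at hPj; exact hPj hPi
        exact mul_nonpos_of_nonpos_of_nonneg
          (mul_nonpos_of_nonneg_of_nonpos (by positivity) (hoff i j hij)) (hw0 j)
  have hg : ∀ i, (∑ j, (v i : ℤ) * C i j * w j) ≤ 0 :=
    fun i => Finset.sum_nonpos (fun j _ => hterm i j)
  -- the sum is at most the (a,b) term
  have hbv : bform C (nvec v) w = ∑ i, ∑ j, (v i : ℤ) * C i j * w j := rfl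
  have hsum1 : bform C (nvec v) w ≤ ∑ j, (v a : ℤ) * C a j * w j := by
    rw [hbv, ← Finset.add_sum_erase _ _ (Finset.mem_univ a)]
    have : ∑ i ∈ Finset.univ.erase a, ∑ j, ((v i : ℤ)) * C i j * w j ≤ 0 :=
      Finset.sum_nonpos (fun i _ => hg i)
    linarith
  have hsum2 : (∑ j, (v a : ℤ) * C a j * w j) ≤ (v a : ℤ) * C a b * w b := by
    rw [← Finset.add_sum_erase _ _ (Finset.mem_univ b)]
    have : ∑ j ∈ Finset.univ.erase b, (v a : ℤ) * C a j * w j ≤ 0 :=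
      Finset.sum_nonpos (fun j _ => hterm a j)
    linarith
  have hva : (v a : ℤ) = (τ a : ℤ) := by
    have h : v a = τ a := hPa
    exact_mod_cast h
  have hwb : w b = (τ b : ℤ) := by
    have : v b = 0 := hvb b hPb
    simp [hw, nvec, this]
  have hfinal : (v a : ℤ) * C a b * w b ≤ -(n : ℤ) := by
    rw [hva, hwb]
    have hτa : (1:ℤ) ≤ (τ a : ℤ) := by exact_mod_cast hτ1 a
    have hτb : (1:ℤ) ≤ (τ b : ℤ) := by exact_mod_cast hτ1 b
    have hCab' : C a b ≤ -1 := by omega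
    have hn : (n:ℤ) ≤ (τ a : ℤ) * (τ b : ℤ) := by
      rcases hδab with hδa | hδb
      · have h1 : (n:ℤ) ≤ (τ a:ℤ) := by
          have h2 : n ≤ n * δ a := Nat.le_mul_of_pos_right n (Nat.pos_of_ne_zero hδa)
          exact_mod_cast le_trans h2 (hτδ a)
        nlinarith
      · have h1 : (n:ℤ) ≤ (τ b:ℤ) := by
          have h2 : n ≤ n * δ b := Nat.le_mul_of_pos_right n (Nat.pos_of_ne_zero hδb)
          exact_mod_cast le_trans h2 (hτδ b)
        nlinarith
    nlinarith
  calc bform C (nvec v) w ≤ _ := hsum1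
  _ ≤ _ := hsum2
  _ ≤ -(n:ℤ) := hfinal


/-- main bound: for any proper nonzero subvector `v` of `τ`,
`4 (v, τ - v) ≤ -(n - K - 1)`. -/
lemma main_bound (hsymm : ∀ i j, C i j = C j i) (hdiag : ∀ i, C i i = 2)
    (hoff : ∀ i j, i ≠ j → C i j ≤ 0)
    {δ : Q0 → ℕ} (hδ : condStar C δ) (τ : Q0 → ℕ) (n : ℕ) (K : ℤ)
    (hK0 : 0 ≤ K) (hK : K + 1 ≤ (n:ℤ))
    (hτ1 : ∀ i, 1 ≤ τ i) (hτδ : ∀ i, n * δ i ≤ τ i)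
    (hrow : ∀ i, rowB C (nvec τ) i ≤ K - n)
    (v : Q0 → ℕ) (hvle : ∀ i, v i ≤ τ i) (hv0 : v ≠ 0) (hvτ : v ≠ τ) :
    4 * bform C (nvec v) (nvec τ - nvec v) ≤ -((n:ℤ) - K - 1) := by
  classical
  by_cases hdich : ∀ i, v i = 0 ∨ v i = τ i
  · -- extreme case
    have h := ext_bound C hsymm hoff hδ τ v n hτ1 hτδ hvle hdich hv0 hvτ
    have hn0 : (0:ℤ) ≤ (n:ℤ) := Int.natCast_nonneg n
    linarith
  · -- interior case
    push_neg at hdich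
    obtain ⟨i0, hi01, hi02⟩ := hdich
    set z : Q0 → ℤ := nvec v + nvec v - nvec τ with hz
    set y : Q0 → ℤ := fun i => |z i| with hy
    have hvι : ∀ i, (0:ℤ) ≤ (v i : ℤ) ∧ (v i : ℤ) ≤ (τ i : ℤ) := by
      intro i; constructor
      · positivity
      · exact_mod_cast hvle i
    have hzi : ∀ i, z i = (v i : ℤ) + (v i : ℤ) - (τ i : ℤ) := fun i => rfl
    have hy0 : ∀ i, 0 ≤ y i := fun i => abs_nonneg _
    have hyi : ∀ i, y i = |z i| := fun _ => rfl
    have hyle : ∀ i, y i ≤ nvec τ i := by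
      intro i
      have h := hvι i
      rw [hyi]
      show |z i| ≤ (τ i : ℤ)
      apply abs_le.mpr
      rw [hzi]
      constructor <;> linarith [h.1, h.2]
    have hyτ : y ≠ nvec τ := by
      intro h
      have h1 := congrFun h i0
      rw [hy] at h1
      have h2 := hzi i0
      have h3 : v i0 ≠ 0 := hi01
      have h4 : v i0 ≠ τ i0 := hi02
      have h5 : (1:ℤ) ≤ (v i0 : ℤ) := by exact_mod_cast Nat.one_le_iff_ne_zero.mpr h3
      have h6 : (v i0 : ℤ) + 1 ≤ (τ i0 : ℤ) := by
        have := hvle i0; have : v i0 < τ i0 := lt_of_le_of_ne this h4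
        exact_mod_cast this
      have h7 : nvec τ i0 = (τ i0 : ℤ) := rfl
      rw [h7] at h1
      rcases abs_cases (z i0) with ⟨ha, _⟩ | ⟨ha, _⟩ <;> simp only [ha] at h1 <;> omega
    have hτ1' : ∀ i, 1 ≤ nvec τ i := fun i => by
      show (1:ℤ) ≤ (τ i : ℤ); exact_mod_cast hτ1 i
    have hcore := core C hsymm hdiag hoff (nvec τ) (n:ℤ) K hK hτ1' hrow y hy0 hyle hyτ
    -- (y,y) ≤ (z,z)
    have hzy : bform C y y ≤ bform C z z := by
      rw [bform, bform]
      apply Finset.sum_le_sum; intro i _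
      apply Finset.sum_le_sum; intro j _
      by_cases hij : i = j
      · subst hij
        rw [hdiag i, hyi]
        apply le_of_eq
        rcases abs_cases (z i) with ⟨ha, _⟩ | ⟨ha, _⟩ <;> rw [ha] <;> ring
      · have hC := hoff i j hij
        have h1 : z i * z j ≤ |z i| * |z j| := by
          rw [← abs_mul]; exact le_abs_self _
        calc y i * C i j * y j = C i j * (|z i| * |z j|) := by rw [hyi, hyi]; ring
        _ ≤ C i j * (z i * z j) := mul_le_mul_of_nonpos_left h1 hC
        _ = z i * C i j * z j := by ring
    have hid := four_identity C hsymm (nvec v) (nvec τ)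
    rw [← hz] at hid
    linarith

end Aux

/-- Lemma 4.2: for the Cartan form `C` of a quiver without loops, `δ` satisfying (∗) for
`C` and `d` of full support, for all large `n` the maximum of
`(τ,τ) - Σ (d^k, d^k)` over decompositions of `τ = d + nδ` into at least two nonzero
dimension vectors equals the maximum of `2(v, τ - v)` over `0 < v < τ`; moreover this
common maximum tends to `-∞` as `n → ∞`. -/
theorem decomp_max_eq_sub_max_and_tendsto_atBot
    {Q0 : Type*} [Fintype Q0] [DecidableEq Q0] [Nonempty Q0]
    (C : Q0 → Q0 → ℤ) (hsymm : ∀ i j, C i j = C j i)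
    (hdiag : ∀ i, C i i = 2) (hoff : ∀ i j, i ≠ j → C i j ≤ 0)
    (δ : Q0 → ℕ) (hδ : condStar C δ)
    (d : Q0 → ℕ) (hd : ∀ i, 1 ≤ d i) :
    (∃ N : ℕ, ∀ n ≥ N, ∃ m : ℤ,
        IsGreatest (decompVals C fun i => d i + n * δ i) m ∧
          IsGreatest (subVals C fun i => d i + n * δ i) m) ∧
      ∀ M : ℤ, ∃ N : ℕ, ∀ n ≥ N,
        ∀ z ∈ decompVals C (fun i => d i + n * δ i), z < M := by
  classical
  set Kd : ℤ := (∑ i, |rowB C (nvec d) i|) with hKdDef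
  have hKd : ∀ i, rowB C (nvec d) i ≤ Kd := by
    intro i
    rw [hKdDef]
    exact le_trans (le_abs_self _)
      (Finset.single_le_sum (f := fun j => |rowB C (nvec d) j|)
        (fun j _ => abs_nonneg _) (Finset.mem_univ i))
  have hKd0 : 0 ≤ Kd := by
    rw [hKdDef]
    exact Finset.sum_nonneg fun i _ => abs_nonneg _
  have hδrow : ∀ i, rowB C (nvec δ) i ≤ -1 := by
    intro i; have h := hδ.1 i; rw [bform_single_left] at h; omega
  have hτ1 : ∀ (n : ℕ) i, 1 ≤ d i + n * δ i := fun n i =>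
    le_trans (hd i) (Nat.le_add_right _ _)
  have hτδ : ∀ (n : ℕ) i, n * δ i ≤ d i + n * δ i := fun n i => Nat.le_add_left _ _
  have hrowτ : ∀ (n : ℕ) i, rowB C (nvec (fun i => d i + n * δ i)) i ≤ Kd - n := by
    intro n i
    have hsplit : rowB C (nvec fun i => d i + n * δ i) i
        = rowB C (nvec d) i + (n:ℤ) * rowB C (nvec δ) i := by
      simp only [rowB, nvec]
      push_cast
      rw [Finset.mul_sum, ← Finset.sum_add_distrib]
      apply Finset.sum_congr rfl; intro j _; ring
    have h2 : (n:ℤ) * rowB C (nvec δ) i ≤ (n:ℤ) * (-1) :=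
      mul_le_mul_of_nonneg_left (hδrow i) (Int.natCast_nonneg n)
    rw [hsplit]
    have := hKd i
    linarith
  -- P1: the main per-n statement
  have P1 : ∀ n : ℕ, Kd + 2 ≤ (n:ℤ) → ∃ m : ℤ,
      IsGreatest (decompVals C fun i => d i + n * δ i) m ∧
      IsGreatest (subVals C fun i => d i + n * δ i) m ∧
      2 * m ≤ -((n:ℤ) - Kd - 1) := by
    intro n hn
    set τ : Q0 → ℕ := fun i => d i + n * δ i with hτdef
    have hMB : ∀ v : Q0 → ℕ, (∀ i, v i ≤ τ i) → v ≠ 0 → v ≠ τ →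
        4 * bform C (nvec v) (nvec τ - nvec v) ≤ -((n:ℤ) - Kd - 1) :=
      fun v h1 h2 h3 => main_bound C hsymm hdiag hoff hδ τ n Kd hKd0
        (by linarith) (hτ1 n) (hτδ n) (hrowτ n) v h1 h2 h3
    set T : Finset ℤ := ((Fintype.piFinset fun i => Finset.range (τ i + 1)).filter
        (fun v => v ≠ 0 ∧ v ≠ τ)).image
        (fun v => 2 * bform C (nvec v) (nvec τ - nvec v)) with hTdef
    have hmemT : ∀ z : ℤ, z ∈ subVals C τ ↔ z ∈ T := by
      intro z
      constructor
      · rintro ⟨v, hle, h0, hτ', rfl⟩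
        rw [hTdef]
        exact Finset.mem_image.mpr ⟨v, Finset.mem_filter.mpr
          ⟨Fintype.mem_piFinset.mpr (fun i => Finset.mem_range.mpr
            (Nat.lt_succ_of_le (hle i))), h0, hτ'⟩, rfl⟩
      · intro hz
        rw [hTdef] at hz
        obtain ⟨v, hv, rfl⟩ := Finset.mem_image.mp hz
        obtain ⟨hbox, h0, hτ'⟩ := Finset.mem_filter.mp hv
        exact ⟨v, fun i => Nat.lt_succ_iff.mp
          (Finset.mem_range.mp (Fintype.mem_piFinset.mp hbox i)), h0, hτ', rfl⟩
    -- witness for nonemptiness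
    have hTne : T.Nonempty := by
      obtain ⟨i0⟩ := (inferInstance : Nonempty Q0)
      obtain ⟨j0, hCj0, hδj0⟩ := neighbor C hδ.1 i0
      have hij : j0 ≠ i0 := by
        intro h; rw [h, hdiag] at hCj0; omega
      set v0 : Q0 → ℕ := Pi.single i0 1 with hv0def
      have hv0le : ∀ i, v0 i ≤ τ i := by
        intro i
        by_cases h : i = i0
        · subst h; rw [hv0def, Pi.single_eq_same]; exact hτ1 n i
        · rw [hv0def, Pi.single_eq_of_ne h]; exact Nat.zero_le _
      have hv00 : v0 ≠ 0 := by
        intro h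
        have := congrFun h i0
        rw [hv0def, Pi.single_eq_same] at this
        simp at this
      have hv0τ : v0 ≠ τ := by
        intro h
        have h1 := congrFun h j0
        rw [hv0def, Pi.single_eq_of_ne hij] at h1
        have h2 := hτ1 n j0
        have h1' : (0:ℕ) = d j0 + n * δ j0 := h1
        omega
      exact ⟨_, (hmemT _).mp ⟨v0, hv0le, hv00, hv0τ, rfl⟩⟩
    set m := T.max' hTne with hmdef
    have hmsub : IsGreatest (subVals C τ) m :=
      ⟨(hmemT m).mpr (T.max'_mem hTne), fun z hz => T.le_max' z ((hmemT z).mp hz)⟩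
    obtain ⟨vm, hvmle, hvm0, hvmτ, hmeq⟩ := hmsub.1
    have hm2 : 2 * m ≤ -((n:ℤ) - Kd - 1) := by
      rw [hmeq]
      have := hMB vm hvmle hvm0 hvmτ
      linarith
    have hm0 : m ≤ 0 := by
      have h1 : 2 * m ≤ -1 := by linarith
      linarith
    -- m ∈ decompVals
    have hb : nvec (fun i => τ i - vm i) = nvec τ - nvec vm := by
      funext i
      show ((τ i - vm i : ℕ) : ℤ) = (τ i : ℤ) - (vm i : ℤ)
      have := hvmle i
      omega
    have hmd : m ∈ decompVals C τ := by
      refine ⟨2, le_refl 2, ![vm, fun i => τ i - vm i], ?_, ?_, ?_⟩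
      · intro k
        fin_cases k
        · simpa using hvm0
        · simp only [Matrix.cons_val_one, Matrix.head_cons]
          intro h
          apply hvmτ
          funext i
          have h1 : τ i - vm i = 0 := congrFun h i
          have := hvmle i
          omega
      · intro i
        rw [Fin.sum_univ_two]
        simp only [Matrix.cons_val_zero, Matrix.cons_val_one, Matrix.head_cons]
        have := hvmle i
        omega
      · rw [Fin.sum_univ_two]
        simp only [Matrix.cons_val_zero, Matrix.cons_val_one, Matrix.head_cons]
        rw [hb]
        have h2id := two_identity C hsymm (nvec vm) (nvec τ)
        rw [hmeq]
        linarith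
    have hub : ∀ z ∈ decompVals C τ, z ≤ m := by
      rintro z ⟨l, hl, ds, hne0, hsum, rfl⟩
      have hpart : ∀ k : Fin l,
          2 * bform C (nvec (ds k)) (nvec τ - nvec (ds k)) ≤ m := by
        intro k
        apply hmsub.2
        refine ⟨ds k, ?_, hne0 k, ?_, rfl⟩
        · intro i
          rw [← hsum i]
          exact Finset.single_le_sum (f := fun k' => ds k' i)
            (fun _ _ => Nat.zero_le _) (Finset.mem_univ k)
        · intro heq
          obtain ⟨k', hk'⟩ : ∃ k' : Fin l, k' ≠ k :=
            Fintype.exists_ne_of_one_lt_card (by rw [Fintype.card_fin]; omega) k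
          apply hne0 k'
          funext i
          show ds k' i = 0
          have h1 := hsum i
          have h2 : ds k i = τ i := congrFun heq i
          have h3 : ds k' i ≤ ∑ k'' ∈ Finset.univ.erase k, ds k'' i :=
            Finset.single_le_sum (f := fun k'' => ds k'' i)
              (fun _ _ => Nat.zero_le _)
              (Finset.mem_erase.mpr ⟨hk', Finset.mem_univ _⟩)
          have h4 : ∑ k'' ∈ Finset.univ.erase k, ds k'' i + ds k i
              = ∑ k'', ds k'' i := Finset.sum_erase_add _ _ (Finset.mem_univ k)
          omega
      have ht : nvec τ = ∑ k : Fin l, nvec (ds k) := by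
        funext i
        rw [Finset.sum_apply]
        show ((τ i : ℕ) : ℤ) = ∑ k, ((ds k i : ℕ) : ℤ)
        rw [← Nat.cast_sum]
        norm_cast
        exact (hsum i).symm
      have hkey : ∑ k : Fin l, 2 * bform C (nvec (ds k)) (nvec τ - nvec (ds k))
          = 2 * (bform C (nvec τ) (nvec τ)
            - ∑ k, bform C (nvec (ds k)) (nvec (ds k))) := by
        have e1 : ∀ k : Fin l, 2 * bform C (nvec (ds k)) (nvec τ - nvec (ds k))
            = 2 * bform C (nvec (ds k)) (nvec τ)
              - 2 * bform C (nvec (ds k)) (nvec (ds k)) := by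
          intro k; rw [bform_sub_right]; ring
        rw [Finset.sum_congr rfl (fun k _ => e1 k), Finset.sum_sub_distrib,
          ← Finset.mul_sum, ← Finset.mul_sum]
        have e2 : ∑ k : Fin l, bform C (nvec (ds k)) (nvec τ)
            = bform C (nvec τ) (nvec τ) := by
          conv_lhs => rw [← bform_sum_left]
          rw [← ht]
        rw [e2]
        ring
      have hsumle : ∑ k : Fin l, 2 * bform C (nvec (ds k)) (nvec τ - nvec (ds k))
          ≤ ∑ _k : Fin l, m := Finset.sum_le_sum (fun k _ => hpart k)
      rw [Finset.sum_const, Finset.card_univ, Fintype.card_fin, nsmul_eq_mul] at hsumle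
      rw [hkey] at hsumle
      have hlm : (l:ℤ) * m ≤ 2 * m := by
        have h2l : (2:ℤ) ≤ (l:ℤ) := by exact_mod_cast hl
        exact mul_le_mul_of_nonpos_right h2l hm0
      linarith
    exact ⟨m, ⟨hmd, hub⟩, hmsub, hm2⟩
  constructor
  · refine ⟨(Kd + 2).toNat, fun n hn => ?_⟩
    have hcast : Kd + 2 ≤ (n:ℤ) :=
      le_trans (Int.self_le_toNat _) (by exact_mod_cast hn)
    obtain ⟨m, h1, h2, _⟩ := P1 n hcast
    exact ⟨m, h1, h2⟩
  · intro M
    refine ⟨((Kd + 2) ⊔ (Kd + 2 - 2 * M)).toNat, fun n hn z hz => ?_⟩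
    have hcast : (Kd + 2) ⊔ (Kd + 2 - 2 * M) ≤ (n:ℤ) :=
      le_trans (Int.self_le_toNat _) (by exact_mod_cast hn)
    have h1 : Kd + 2 ≤ (n:ℤ) := le_trans (le_max_left _ _) hcast
    have h2 : Kd + 2 - 2 * M ≤ (n:ℤ) := le_trans (le_max_right _ _) hcast
    obtain ⟨m, hgd, _, hm2⟩ := P1 n h1
    have hzm : z ≤ m := hgd.2 hz
    omega
end

section
/- Let Q0 be a finite type and let a, δ : Q0 → ℕ with δ i ≤ a i for every i and δ ≠ 0. Work in ℚ[[t]] and set φ_N(t) := ∏_{j=1}^N (1 − t^j). Then for every natural number j with j ≤ min_{i ∈ supp δ} (a i − δ i), the coefficient of t^j in ∏_{i ∈ Q0} φ_{a i}(t)^{−1} − ∏_{i ∈ Q0} φ_{a i − δ i}(t)^{−1} is zero; i.e., this difference of power series has order at least 1 + min_{i ∈ supp δ}(a i − δ i). -/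
open Finset PowerSeries

/-- `φ_N(t) = ∏_{j=1}^N (1 - t^j)` in `ℚ[[t]]`. -/
noncomputable def phiQ (N : ℕ) : PowerSeries ℚ :=
  ∏ j ∈ Finset.Icc 1 N, (1 - PowerSeries.X ^ j)

lemma constantCoeff_phiQ (N : ℕ) : PowerSeries.constantCoeff (R := ℚ) (phiQ N) = 1 := by
  rw [phiQ, map_prod]
  refine Finset.prod_eq_one fun m hm => ?_
  have hm1 : m ≠ 0 := by
    have := (Finset.mem_Icc.mp hm).1; omega
  simp [zero_pow hm1]

lemma phiQ_mul_inv (N : ℕ) : phiQ N * (phiQ N)⁻¹ = 1 :=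
  PowerSeries.mul_inv_cancel _ (by rw [constantCoeff_phiQ]; exact one_ne_zero)

/-- Order estimate: if `δ ≤ a` componentwise and `j ≤ a i - δ i` for every `i ∈ supp δ`,
then the coefficient of `t^j` in `∏_i φ_{a i}(t)⁻¹ - ∏_i φ_{a i - δ i}(t)⁻¹` vanishes. -/
theorem coeff_sub_prod_inv_phi_eq_zero
    {Q0 : Type*} [Fintype Q0] (a δ : Q0 → ℕ)
    (hle : ∀ i, δ i ≤ a i) (hδ : δ ≠ 0)
    (j : ℕ) (hj : ∀ i, δ i ≠ 0 → j ≤ a i - δ i) :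
    PowerSeries.coeff (R := ℚ) j
        ((∏ i : Q0, (phiQ (a i))⁻¹) - ∏ i : Q0, (phiQ (a i - δ i))⁻¹) = 0 := by
  set I : Ideal (PowerSeries ℚ) := Ideal.span {(PowerSeries.X : PowerSeries ℚ) ^ (j + 1)}
  set π : PowerSeries ℚ →+* _ := Ideal.Quotient.mk I
  -- π kills X^m for m ≥ j+1
  have hX : ∀ m : ℕ, j + 1 ≤ m → π ((PowerSeries.X : PowerSeries ℚ) ^ m) = 0 := by
    intro m hm
    rw [Ideal.Quotient.eq_zero_iff_mem, Ideal.mem_span_singleton]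
    exact pow_dvd_pow _ hm
  -- π (phiQ N) = π (phiQ M) whenever j ≤ M ≤ N
  have key : ∀ M N : ℕ, j ≤ M → M ≤ N → π (phiQ N) = π (phiQ M) := by
    intro M N hjM hMN
    have hsplit : phiQ M * ∏ m ∈ Finset.Ioc M N, (1 - PowerSeries.X ^ m) = phiQ N := by
      rw [phiQ, phiQ]
      have h1 : Finset.Icc 1 M = Finset.Ioc 0 M := by
        ext x; simp [Nat.lt_iff_add_one_le]
      have h2 : Finset.Icc 1 N = Finset.Ioc 0 N := by
        ext x; simp [Nat.lt_iff_add_one_le]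
      rw [h1, h2]
      exact Finset.prod_Ioc_consecutive _ (Nat.zero_le M) hMN
    rw [← hsplit, map_mul]
    have : π (∏ m ∈ Finset.Ioc M N, (1 - PowerSeries.X ^ m)) = 1 := by
      rw [map_prod]
      refine Finset.prod_eq_one fun m hm => ?_
      have hm' : j + 1 ≤ m := by
        have := (Finset.mem_Ioc.mp hm).1; omega
      rw [map_sub, map_one, hX m hm', sub_zero]
    rw [this, mul_one]
  -- π of inverses
  have keyinv : ∀ M N : ℕ, j ≤ M → M ≤ N → π (phiQ N)⁻¹ = π (phiQ M)⁻¹ := by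
    intro M N hjM hMN
    calc π (phiQ N)⁻¹ = π (phiQ N)⁻¹ * (π (phiQ M) * π (phiQ M)⁻¹) := by
            rw [← map_mul, phiQ_mul_inv, map_one, mul_one]
      _ = (π (phiQ N)⁻¹ * π (phiQ N)) * π (phiQ M)⁻¹ := by
            rw [key M N hjM hMN]; ring
      _ = π (phiQ M)⁻¹ := by
            rw [← map_mul, mul_comm (phiQ N)⁻¹, phiQ_mul_inv, map_one, one_mul]
  have hπ : π ((∏ i : Q0, (phiQ (a i))⁻¹) - ∏ i : Q0, (phiQ (a i - δ i))⁻¹) = 0 := by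
    rw [map_sub, map_prod, map_prod]
    have heach : ∀ i : Q0, π (phiQ (a i))⁻¹ = π (phiQ (a i - δ i))⁻¹ := by
      intro i
      by_cases h : δ i = 0
      · rw [h, Nat.sub_zero]
      · exact keyinv (a i - δ i) (a i) (hj i h) (Nat.sub_le _ _)
    rw [Finset.prod_congr rfl fun i _ => heach i, sub_self]
  have hdvd : (PowerSeries.X : PowerSeries ℚ) ^ (j + 1) ∣
      ((∏ i : Q0, (phiQ (a i))⁻¹) - ∏ i : Q0, (phiQ (a i - δ i))⁻¹) :=
    Ideal.mem_span_singleton.mp (Ideal.Quotient.eq_zero_iff_mem.mp hπ)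
  exact (PowerSeries.X_pow_dvd_iff.mp hdvd) j (Nat.lt_succ_self j)
end
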